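/- Let B be a ring and S a multiplicatively closed subset. Then S is a right Ore set in B (i.e. for all b ∈ B, s ∈ S: bS ∩ sB ≠ ∅, and sb = 0 implies bt = 0 for some t ∈ S) if and only if the category 𝒮 is filtered and the module of right fractions B|S is S-local (every s ∈ S acts invertibly on B|S by left multiplication). -/

import Mathlib

/-! STATEMENT 3: S is a right Ore set in B iff the category 𝒮 is filtered and the
module of right fractions B|S is S-local. -/

/-- The submodule of relations defining the module of right fractions. -/
noncomputable def fracRel (B : Type) [Ring B] (S : Set B) : Submodule B (↥S →₀ B) :=
  Submodule.span B { v | ∃ (s x : B) (hs : s ∈ S) (hsx : s * x ∈ S),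
    v = Finsupp.single ⟨s * x, hsx⟩ x - Finsupp.single ⟨s, hs⟩ 1 }

/-- The left `B`-module `B|S` of right fractions with denominators in `S`. -/
abbrev Frac (B : Type) [Ring B] (S : Set B) : Type :=
  (↥S →₀ B) ⧸ fracRel B S

/-- The fraction `b|s`. -/
noncomputable def fracElt (B : Type) [Ring B] (S : Set B) (b s : B) (hs : s ∈ S) :
    Frac B S :=
  Submodule.Quotient.mk (Finsupp.single ⟨s, hs⟩ b)

/-- A left `B`-module is `S`-local if every `s ∈ S` acts invertibly by left
multiplication. -/
def SLocal (B : Type) [Ring B] (S : Set B) (N : Type) [AddCommGroup N] [Module B N] :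
    Prop :=
  ∀ s ∈ S, Function.Bijective (fun n : N => s • n)

section Aux

variable {B : Type} [Ring B] {S : Set B}

/-- `b|s = (b*x)|(s*x)`. -/
theorem fracElt_shift (b s x : B) (hs : s ∈ S) (hsx : s * x ∈ S) :
    fracElt B S b s hs = fracElt B S (b * x) (s * x) hsx := by
  unfold fracElt
  rw [Submodule.Quotient.eq]
  have h0 : (Finsupp.single (⟨s * x, hsx⟩ : ↥S) x - Finsupp.single ⟨s, hs⟩ 1)
      ∈ fracRel B S := Submodule.subset_span ⟨s, x, hs, hsx, rfl⟩
  have h2 := Submodule.smul_mem (fracRel B S) b h0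
  rw [smul_sub, Finsupp.smul_single, Finsupp.smul_single, smul_eq_mul, smul_eq_mul,
    mul_one] at h2
  have h3 := Submodule.neg_mem (fracRel B S) h2
  rwa [neg_sub] at h3

theorem fracElt_congr (b : B) {s t : B} (h : s = t) (hs : s ∈ S) (ht : t ∈ S) :
    fracElt B S b s hs = fracElt B S b t ht := by subst h; rfl

theorem fracElt_add (b c s : B) (hs : s ∈ S) :
    fracElt B S b s hs + fracElt B S c s hs = fracElt B S (b + c) s hs := by
  unfold fracElt
  rw [← Submodule.Quotient.mk_add, Finsupp.single_add]

theorem fracElt_smul (b c s : B) (hs : s ∈ S) :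
    b • fracElt B S c s hs = fracElt B S (b * c) s hs := by
  unfold fracElt
  rw [← Submodule.Quotient.mk_smul, Finsupp.smul_single, smul_eq_mul]

theorem fracElt_zero (s : B) (hs : s ∈ S) : fracElt B S 0 s hs = 0 := by
  unfold fracElt
  rw [Finsupp.single_zero, Submodule.Quotient.mk_eq_zero]
  exact Submodule.zero_mem _

/-- Extend a denominator: for any finite set of elements of `S` there is a common
"multiple" `u * q` of `u` divisible by each of them. -/
theorem extend_denom (hF1 : ∀ s ∈ S, ∀ t ∈ S, ∃ x y : B, s * x = t * y ∧ s * x ∈ S)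
    (T : Finset ↥S) (u : B) (hu : u ∈ S) :
    ∃ q : B, ∃ f : ↥S → B, u * q ∈ S ∧ ∀ s ∈ T, (s : B) * f s = u * q := by
  classical
  induction T using Finset.induction_on with
  | empty => exact ⟨1, fun _ => 0, by simpa using hu, fun s hs => absurd hs (by simp)⟩
  | @insert a T ha ih =>
    obtain ⟨q, f, hq, hf⟩ := ih
    obtain ⟨x, y, hxy, hxS⟩ := hF1 (a : B) a.2 (u * q) hq
    refine ⟨q * y, fun t => if t = a then x else f t * y, ?_, ?_⟩
    · rw [← mul_assoc, ← hxy]; exact hxS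
    · intro t ht
      rcases Finset.mem_insert.mp ht with h | h
      · subst h
        show (t : B) * (if t = t then x else f t * y) = u * (q * y)
        rw [if_pos rfl, hxy, ← mul_assoc]
      · have hne : t ≠ a := by rintro rfl; exact ha h
        simp only [if_neg hne]
        rw [← mul_assoc, ← mul_assoc, hf t h]

/-- The key lemma: if an element of the free module collapses (over its support) to the
fraction `d|u`, and it lies in the relation submodule, then `d` is annihilated by some
`z` with `u * z ∈ S`. -/
theorem key_lemma (hF1 : ∀ s ∈ S, ∀ t ∈ S, ∃ x y : B, s * x = t * y ∧ s * x ∈ S)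
    (hF2 : ∀ s ∈ S, ∀ x y : B, s * x = s * y → s * x ∈ S →
      ∃ z : B, x * z = y * z ∧ s * x * z ∈ S)
    {v : ↥S →₀ B} (hv : v ∈ fracRel B S) :
    ∀ u d : B, u ∈ S → ∀ f₀ : ↥S → B,
      (∀ s ∈ v.support, (s : B) * f₀ s = u) →
      v.sum (fun s c => c * f₀ s) = d →
      ∃ z : B, u * z ∈ S ∧ d * z = 0 := by
  classical
  induction hv using Submodule.span_induction with
  | mem g hg =>
    obtain ⟨s, x, hs, hsx, rfl⟩ := hg
    intro u d hu f₀ hf₀ hd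
    set a : ↥S := ⟨s * x, hsx⟩ with ha_def
    set b : ↥S := ⟨s, hs⟩ with hb_def
    have hd' : x * f₀ a - 1 * f₀ b = d := by
      rw [← hd, Finsupp.sum_sub_index (fun t b₁ b₂ => sub_mul b₁ b₂ (f₀ t)),
        Finsupp.sum_single_index (zero_mul (f₀ a)), Finsupp.sum_single_index (zero_mul (f₀ b))]
    by_cases htriv : (1 : B) = 0
    · haveI : Subsingleton B := subsingleton_of_zero_eq_one htriv.symm
      exact ⟨1, by simpa using hu, Subsingleton.elim _ _⟩
    by_cases hab : a = b
    · -- s * x = s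
      have hsxs : s * x = s := congrArg Subtype.val hab
      by_cases hx1 : x = 1
      · refine ⟨1, by simpa using hu, ?_⟩
        have : d = 0 := by
          rw [← hd', hab, hx1, one_mul, sub_self]
        rw [this, zero_mul]
      · -- the generator is single b (x - 1), with b in its support
        have hgb : (Finsupp.single a x - Finsupp.single b 1 : ↥S →₀ B) b = x - 1 := by
          rw [hab, Finsupp.sub_apply, Finsupp.single_eq_same, Finsupp.single_eq_same]
        have hbsupp : b ∈ (Finsupp.single a x - Finsupp.single b 1).support := by
          rw [Finsupp.mem_support_iff, hgb]
          exact sub_ne_zero.mpr hx1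
        have hub : s * f₀ b = u := hf₀ b hbsupp
        have heq : s * (x * f₀ b) = s * f₀ b := by
          rw [← mul_assoc, hsxs]
        have hmem : s * (x * f₀ b) ∈ S := by rw [heq, hub]; exact hu
        obtain ⟨z, hz1, hz2⟩ := hF2 s hs (x * f₀ b) (f₀ b) heq hmem
        refine ⟨z, ?_, ?_⟩
        · rw [← hub, ← heq]
          exact hz2
        · have hdd : d = x * f₀ b - f₀ b := by rw [← hd', hab, one_mul]
          rw [hdd, sub_mul, hz1, sub_self]
    · -- a ≠ b
      have hab' : s * x ≠ s := fun h => hab (Subtype.ext h)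
      have hgb : (Finsupp.single a x - Finsupp.single b 1 : ↥S →₀ B) b = -1 := by
        rw [Finsupp.sub_apply, Finsupp.single_eq_same, Finsupp.single_eq_of_ne' hab,
          zero_sub]
      have hbsupp : b ∈ (Finsupp.single a x - Finsupp.single b 1).support := by
        rw [Finsupp.mem_support_iff, hgb]
        simpa using htriv
      have hub : s * f₀ b = u := hf₀ b hbsupp
      by_cases hx0 : x = 0
      · subst hx0
        have h0S : (0 : B) ∈ S := by rwa [mul_zero] at hsx
        have hd0 : d = -f₀ b := by rw [← hd', zero_mul, one_mul, zero_sub]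
        obtain ⟨p, y, hpy, hpS⟩ := hF1 u hu 0 h0S
        have hup0 : u * p = 0 := by rw [hpy, zero_mul]
        have heq : s * (f₀ b * p) = s * 0 := by
          rw [← mul_assoc, hub, hup0, mul_zero]
        have hmem : s * (f₀ b * p) ∈ S := by
          rw [← mul_assoc, hub]; rwa [hup0] at hpS ⊢
        obtain ⟨z, hz1, hz2⟩ := hF2 s hs (f₀ b * p) 0 heq hmem
        refine ⟨p * z, ?_, ?_⟩
        · have : u * (p * z) = s * (f₀ b * p) * z := by
            rw [← mul_assoc, ← mul_assoc, hub]
          rw [this]; exact hz2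
        · rw [zero_mul] at hz1
          rw [hd0, neg_mul, ← mul_assoc, hz1, neg_zero]
      · have hga : (Finsupp.single a x - Finsupp.single b 1 : ↥S →₀ B) a = x := by
          rw [Finsupp.sub_apply, Finsupp.single_eq_same,
            Finsupp.single_eq_of_ne' (fun h => hab h.symm), sub_zero]
        have hasupp : a ∈ (Finsupp.single a x - Finsupp.single b 1).support := by
          rw [Finsupp.mem_support_iff, hga]; exact hx0
        have hua : s * x * f₀ a = u := hf₀ a hasupp
        have heq : s * (x * f₀ a) = s * f₀ b := by rw [← mul_assoc, hua, hub]
        have hmem : s * (x * f₀ a) ∈ S := by rw [← mul_assoc, hua]; exact hu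
        obtain ⟨z, hz1, hz2⟩ := hF2 s hs (x * f₀ a) (f₀ b) heq hmem
        refine ⟨z, ?_, ?_⟩
        · have : u * z = s * (x * f₀ a) * z := by rw [← mul_assoc, hua]
          rw [this]; exact hz2
        · rw [← hd', one_mul, sub_mul, hz1, sub_self]
  | zero =>
    intro u d hu f₀ _ hd
    rw [Finsupp.sum_zero_index] at hd
    exact ⟨1, by simpa using hu, by rw [← hd, zero_mul]⟩
  | add v w hv hw ihv ihw =>
    intro u d hu f₀ hf₀ hd
    classical
    set T : Finset ↥S := v.support ∪ w.support with hT
    have hsub : (v + w).support ⊆ T := Finsupp.support_add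
    obtain ⟨q, f₁, hq, hf₁⟩ := extend_denom hF1 T u hu
    set f : ↥S → B := fun s => if s ∈ (v + w).support then f₀ s * q else f₁ s with hf_def
    have hfT : ∀ s ∈ T, (s : B) * f s = u * q := by
      intro s hsT
      by_cases h : s ∈ (v + w).support
      · simp only [hf_def, if_pos h]
        rw [← mul_assoc, hf₀ s h]
      · simp only [hf_def, if_neg h]
        exact hf₁ s hsT
    set d₁ : B := ∑ s ∈ T, v s * f s with hd₁
    set d₂ : B := ∑ s ∈ T, w s * f s with hd₂
    have hA : d * q = d₁ + d₂ := by
      have e1 : d * q = ∑ s ∈ (v + w).support, (v + w) s * f s := by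
        rw [← hd]
        rw [Finsupp.sum, Finset.sum_mul]
        apply Finset.sum_congr rfl
        intro s hs
        simp only [hf_def, if_pos hs, mul_assoc]
      have e2 : ∑ s ∈ (v + w).support, (v + w) s * f s = ∑ s ∈ T, (v + w) s * f s := by
        apply Finset.sum_subset hsub
        intro s _ hnot
        rw [Finsupp.notMem_support_iff.mp hnot, zero_mul]
      rw [e1, e2, hd₁, hd₂, ← Finset.sum_add_distrib]
      apply Finset.sum_congr rfl
      intro s _
      rw [Finsupp.add_apply, add_mul]
    have hvs : v.sum (fun s c => c * f s) = d₁ :=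
      Finsupp.sum_of_support_subset v
        (Finset.subset_union_left : v.support ⊆ T) _ (fun i _ => zero_mul _)
    obtain ⟨z₁, hz₁S, hz₁⟩ := ihv (u * q) d₁ hq f (fun s hs => hfT s (Finset.mem_union_left _ hs)) hvs
    have hws2 : w.sum (fun s c => c * (f s * z₁)) = d₂ * z₁ := by
      have e := Finsupp.sum_of_support_subset w
        (Finset.subset_union_right : w.support ⊆ T)
        (fun s c => c * (f s * z₁)) (fun i _ => zero_mul _)
      rw [e, hd₂, Finset.sum_mul]
      exact Finset.sum_congr rfl (fun s _ => by rw [mul_assoc])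
    obtain ⟨z₂, hz₂S, hz₂⟩ := ihw (u * q * z₁) (d₂ * z₁) hz₁S (fun s => f s * z₁)
      (fun s hs => by rw [← mul_assoc, hfT s (Finset.mem_union_right _ hs)]) hws2
    refine ⟨q * (z₁ * z₂), ?_, ?_⟩
    · have : u * (q * (z₁ * z₂)) = u * q * z₁ * z₂ := by rw [← mul_assoc, ← mul_assoc]
      rw [this]; exact hz₂S
    · have : d * (q * (z₁ * z₂)) = (d * q) * z₁ * z₂ := by rw [← mul_assoc, ← mul_assoc]
      rw [this, hA, add_mul, add_mul, hz₁, zero_mul, zero_add, hz₂]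
  | smul b' v hv ih =>
    intro u d hu f₀ hf₀ hd
    classical
    set T : Finset ↥S := v.support with hT
    have hsub : (b' • v).support ⊆ T := Finsupp.support_smul
    obtain ⟨q, f₁, hq, hf₁⟩ := extend_denom hF1 T u hu
    set f : ↥S → B := fun s => if s ∈ (b' • v).support then f₀ s * q else f₁ s with hf_def
    have hfT : ∀ s ∈ T, (s : B) * f s = u * q := by
      intro s hsT
      by_cases h : s ∈ (b' • v).support
      · simp only [hf_def, if_pos h]
        rw [← mul_assoc, hf₀ s h]
      · simp only [hf_def, if_neg h]
        exact hf₁ s hsT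
    set d₁ : B := ∑ s ∈ T, v s * f s with hd₁
    have hA : d * q = b' * d₁ := by
      have e1 : d * q = ∑ s ∈ (b' • v).support, (b' • v) s * f s := by
        rw [← hd, Finsupp.sum, Finset.sum_mul]
        apply Finset.sum_congr rfl
        intro s hs
        simp only [hf_def, if_pos hs, mul_assoc]
      have e2 : ∑ s ∈ (b' • v).support, (b' • v) s * f s = ∑ s ∈ T, (b' • v) s * f s := by
        apply Finset.sum_subset hsub
        intro s _ hnot
        rw [Finsupp.notMem_support_iff.mp hnot, zero_mul]
      rw [e1, e2, hd₁, Finset.mul_sum]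
      apply Finset.sum_congr rfl
      intro s _
      rw [Finsupp.smul_apply, smul_eq_mul, mul_assoc]
    have hvs : v.sum (fun s c => c * f s) = d₁ :=
      Finsupp.sum_of_support_subset v (Finset.Subset.refl _) _ (fun i _ => zero_mul _)
    obtain ⟨z, hzS, hz⟩ := ih (u * q) d₁ hq f hfT hvs
    refine ⟨q * z, ?_, ?_⟩
    · rw [← mul_assoc]; exact hzS
    · rw [← mul_assoc, hA, mul_assoc, hz, mul_zero]

theorem key_single (hF1 : ∀ s ∈ S, ∀ t ∈ S, ∃ x y : B, s * x = t * y ∧ s * x ∈ S)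
    (hF2 : ∀ s ∈ S, ∀ x y : B, s * x = s * y → s * x ∈ S →
      ∃ z : B, x * z = y * z ∧ s * x * z ∈ S)
    {u d : B} (hu : u ∈ S)
    (h : Finsupp.single (⟨u, hu⟩ : ↥S) d ∈ fracRel B S) :
    ∃ z : B, u * z ∈ S ∧ d * z = 0 := by
  apply key_lemma hF1 hF2 h u d hu (fun _ => 1) ?_ ?_
  · intro t ht
    have h2 : t ∈ ({⟨u, hu⟩} : Finset ↥S) := Finsupp.support_single_subset ht
    rw [Finset.mem_singleton] at h2
    subst h2
    exact mul_one u
  · rw [Finsupp.sum_single_index (zero_mul (1 : B)), mul_one]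

/-- Every element of `Frac B S` is a single fraction, assuming `𝒮` is filtered. -/
theorem common_denom (h1 : (1 : B) ∈ S)
    (hF1 : ∀ s ∈ S, ∀ t ∈ S, ∃ x y : B, s * x = t * y ∧ s * x ∈ S)
    (m : Frac B S) : ∃ (c u : B) (hu : u ∈ S), m = fracElt B S c u hu := by
  obtain ⟨v, rfl⟩ := Submodule.Quotient.mk_surjective _ m
  induction v using Finsupp.induction with
  | zero =>
    refine ⟨0, 1, h1, ?_⟩
    rw [fracElt_zero]
    rw [show (0 : ↥S →₀ B) = 0 from rfl]
    exact (Submodule.Quotient.mk_eq_zero _).mpr (Submodule.zero_mem _)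
  | single_add a c' w _ _ ih =>
    obtain ⟨c, u, hu, hw⟩ := ih
    obtain ⟨x, y, hxy, hxS⟩ := hF1 (a : B) a.2 u hu
    have huy : u * y ∈ S := hxy ▸ hxS
    have e1 : (Submodule.Quotient.mk (Finsupp.single a c') : Frac B S)
        = fracElt B S c' (a : B) a.2 := rfl
    have step : (Submodule.Quotient.mk (Finsupp.single a c' + w) : Frac B S)
        = fracElt B S c' (a : B) a.2 + fracElt B S c u hu := by
      rw [Submodule.Quotient.mk_add, e1, hw]
    rw [step, fracElt_shift c' (a : B) x a.2 hxS, fracElt_shift c u y hu huy,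
      fracElt_congr (c' * x) hxy hxS huy, fracElt_add]
    exact ⟨c' * x + c * y, u * y, huy, rfl⟩

end Aux

theorem statement3 (B : Type) [Ring B] (S : Set B)
    (h1 : (1 : B) ∈ S) (hmul : ∀ s ∈ S, ∀ t ∈ S, s * t ∈ S) :
    -- S is a right Ore set:
    ((∀ b : B, ∀ s ∈ S, ∃ u ∈ S, ∃ c : B, b * u = s * c) ∧
      (∀ b : B, ∀ s ∈ S, s * b = 0 → ∃ t ∈ S, b * t = 0)) ↔
    -- iff 𝒮 is filtered and B|S is S-local:
    (((∀ s ∈ S, ∀ t ∈ S, ∃ x y : B, s * x = t * y ∧ s * x ∈ S) ∧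
        (∀ s ∈ S, ∀ x y : B, s * x = s * y → s * x ∈ S →
          ∃ z : B, x * z = y * z ∧ s * x * z ∈ S)) ∧
      SLocal B S (Frac B S)) := by
  constructor
  · rintro ⟨hO1, hO2⟩
    have hF1 : ∀ s ∈ S, ∀ t ∈ S, ∃ x y : B, s * x = t * y ∧ s * x ∈ S := by
      intro s hs t ht
      obtain ⟨u, hu, c, hc⟩ := hO1 s t ht
      exact ⟨u, c, hc, hmul s hs u hu⟩
    have hF2 : ∀ s ∈ S, ∀ x y : B, s * x = s * y → s * x ∈ S →
        ∃ z : B, x * z = y * z ∧ s * x * z ∈ S := by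
      intro s hs x y hxy hsxS
      have h0 : s * (x - y) = 0 := by rw [mul_sub, hxy, sub_self]
      obtain ⟨t, ht, h0'⟩ := hO2 (x - y) s hs h0
      rw [sub_mul, sub_eq_zero] at h0'
      exact ⟨t, h0', hmul (s * x) hsxS t ht⟩
    refine ⟨⟨hF1, hF2⟩, ?_⟩
    intro s hs
    constructor
    · -- injective
      have hker : ∀ m : Frac B S, s • m = 0 → m = 0 := by
        intro m hm
        obtain ⟨c, u, hu, rfl⟩ := common_denom h1 hF1 m
        rw [fracElt_smul] at hm
        have hmem : Finsupp.single (⟨u, hu⟩ : ↥S) (s * c) ∈ fracRel B S := by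
          rw [← Submodule.Quotient.mk_eq_zero]
          exact hm
        obtain ⟨z, hzS, hz⟩ := key_single hF1 hF2 hu hmem
        rw [mul_assoc] at hz
        obtain ⟨t, ht, htz⟩ := hO2 (c * z) s hs hz
        have huzt : u * (z * t) ∈ S := by
          rw [← mul_assoc]; exact hmul (u * z) hzS t ht
        rw [fracElt_shift c u (z * t) hu huzt]
        have : c * (z * t) = 0 := by rw [← mul_assoc]; exact htz
        rw [this, fracElt_zero]
      intro m₁ m₂ hm
      have : s • (m₁ - m₂) = 0 := by
        rw [smul_sub]
        simp only at hm
        rw [hm, sub_self]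
      have := hker _ this
      exact sub_eq_zero.mp this
    · -- surjective
      intro m
      obtain ⟨c, t, ht, rfl⟩ := common_denom h1 hF1 m
      obtain ⟨u, hu, c', hc'⟩ := hO1 c s hs
      have htu : t * u ∈ S := hmul t ht u hu
      refine ⟨fracElt B S c' (t * u) htu, ?_⟩
      simp only
      rw [fracElt_smul, ← hc', ← fracElt_shift c t u ht htu]
  · rintro ⟨⟨hF1, hF2⟩, hloc⟩
    constructor
    · -- O1
      intro b s hs
      obtain ⟨m, hm⟩ := (hloc s hs).2 (fracElt B S b 1 h1)
      obtain ⟨c, u, hu, rfl⟩ := common_denom h1 hF1 m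
      simp only at hm
      rw [fracElt_smul] at hm
      have h1u : (1 : B) * u ∈ S := by rwa [one_mul]
      have e1 : fracElt B S b 1 h1 = fracElt B S (b * u) u hu := by
        rw [fracElt_shift b 1 u h1 h1u]
        exact fracElt_congr (b * u) (one_mul u) h1u hu
      rw [e1] at hm
      have hmem : Finsupp.single (⟨u, hu⟩ : ↥S) (s * c - b * u) ∈ fracRel B S := by
        have := (Submodule.Quotient.eq (fracRel B S)).mp hm
        rwa [← Finsupp.single_sub] at this
      obtain ⟨z, hzS, hz⟩ := key_single hF1 hF2 hu hmem
      rw [sub_mul, sub_eq_zero] at hz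
      refine ⟨u * z, hzS, c * z, ?_⟩
      rw [← mul_assoc, ← mul_assoc, hz]
    · -- O2
      intro b s hs hsb
      have hinj := (hloc s hs).1
      have h0 : s • fracElt B S b 1 h1 = s • (0 : Frac B S) := by
        rw [fracElt_smul, hsb, fracElt_zero, smul_zero]
      have hb0 : fracElt B S b 1 h1 = 0 := hinj h0
      have hmem : Finsupp.single (⟨1, h1⟩ : ↥S) b ∈ fracRel B S := by
        rw [← Submodule.Quotient.mk_eq_zero]
        exact hb0
      obtain ⟨z, hzS, hz⟩ := key_single hF1 hF2 h1 hmem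
      rw [one_mul] at hzS
      exact ⟨z, hzS, hz⟩
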